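/- arXiv:1202.1785 — 3 statements merged into one kernel-verified Lean document; each statement's English description precedes it below -/
import Mathlib

section
/- Let k ∈ ℂ and z₀ ∈ ℂ. Suppose g, M₁₁, M₂₁ : ℂ → ℂ are real-differentiable at z₀ with g(z₀) ≠ 0, and suppose that at z₀ the equations ∂̄M₁₁(z₀) = Q₁₂(z₀)·M₂₁(z₀) and ∂M₂₁(z₀) + i·k·M₂₁(z₀) = Q₂₁(z₀)·M₁₁(z₀) hold. Then ∂̄(z ↦ M₁₁(z)/g(z) − 1)(z₀) = ∂(z ↦ M₂₁(z)/g(z))(z₀) + i·k·M₂₁(z₀)/g(z₀); that is, ∂̄(g⁻¹M₁₁ − 1) = (∂ + ik)(g⁻¹M₂₁) at z₀. -/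
open Complex

/-- Wirtinger derivative ∂f(z) = (1/2)(Df(z)(1) - i·Df(z)(i)), with Df the real Fréchet derivative. -/
noncomputable def dz (f : ℂ → ℂ) (z : ℂ) : ℂ :=
  (1/2 : ℂ) * (fderiv ℝ f z 1 - Complex.I * fderiv ℝ f z Complex.I)

/-- Wirtinger derivative ∂̄f(z) = (1/2)(Df(z)(1) + i·Df(z)(i)). -/
noncomputable def dzbar (f : ℂ → ℂ) (z : ℂ) : ℂ :=
  (1/2 : ℂ) * (fderiv ℝ f z 1 + Complex.I * fderiv ℝ f z Complex.I)

/-- Matrix potential entry Q₁₂(z) = -∂g(z)/g(z). -/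
noncomputable def Q12 (g : ℂ → ℂ) (z : ℂ) : ℂ := - dz g z / g z

/-- Matrix potential entry Q₂₁(z) = -∂̄g(z)/g(z). -/
noncomputable def Q21 (g : ℂ → ℂ) (z : ℂ) : ℂ := - dzbar g z / g z

/-- The unimodular exponential e(z,k) = exp(i(zk + z̄k̄)). -/
noncomputable def efun (z k : ℂ) : ℂ :=
  Complex.exp (Complex.I * (z * k + (starRingEnd ℂ) z * (starRingEnd ℂ) k))

theorem stmt0 (k z₀ : ℂ) (g M₁₁ M₂₁ : ℂ → ℂ)
    (hg : DifferentiableAt ℝ g z₀)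
    (hM11 : DifferentiableAt ℝ M₁₁ z₀)
    (hM21 : DifferentiableAt ℝ M₂₁ z₀)
    (hg0 : g z₀ ≠ 0)
    (h1 : dzbar M₁₁ z₀ = Q12 g z₀ * M₂₁ z₀)
    (h2 : dz M₂₁ z₀ + Complex.I * k * M₂₁ z₀ = Q21 g z₀ * M₁₁ z₀) :
    dzbar (fun z => M₁₁ z / g z - 1) z₀ =
      dz (fun z => M₂₁ z / g z) z₀ + Complex.I * k * M₂₁ z₀ / g z₀ := by

  have Hg := hg.hasFDerivAt
  -- derivative of the quotient, evaluated at a vector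
  have key : ∀ (M : ℂ → ℂ), DifferentiableAt ℝ M z₀ → ∀ v : ℂ,
      fderiv ℝ (fun z => M z / g z) z₀ v
        = (g z₀)⁻¹ * fderiv ℝ M z₀ v - M z₀ * ((g z₀)^2)⁻¹ * fderiv ℝ g z₀ v := by
    intro M hM v
    have Hinv : HasFDerivAt (fun z => (g z)⁻¹)
        (((ContinuousLinearMap.smulRight (1 : ℂ →L[ℂ] ℂ)
          (-((g z₀)^2)⁻¹)).restrictScalars ℝ).comp (fderiv ℝ g z₀)) z₀ :=
      ((hasDerivAt_inv hg0).hasFDerivAt.restrictScalars ℝ).comp z₀ Hg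
    have Hq : HasFDerivAt (fun z => M z / g z)
        (M z₀ • (((ContinuousLinearMap.smulRight (1 : ℂ →L[ℂ] ℂ)
          (-((g z₀)^2)⁻¹)).restrictScalars ℝ).comp (fderiv ℝ g z₀))
          + (g z₀)⁻¹ • fderiv ℝ M z₀) z₀ := by
      have H := hM.hasFDerivAt.mul Hinv
      simp only [div_eq_mul_inv]
      exact H
    rw [Hq.fderiv]
    simp [ContinuousLinearMap.smul_apply, ContinuousLinearMap.add_apply,
      ContinuousLinearMap.comp_apply, ContinuousLinearMap.smulRight_apply,
      smul_eq_mul]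
    ring
  have hsub : fderiv ℝ (fun z => M₁₁ z / g z - 1) z₀
      = fderiv ℝ (fun z => M₁₁ z / g z) z₀ := by
    simpa using fderiv_sub_const (𝕜 := ℝ) (f := fun z => M₁₁ z / g z)
      (x := z₀) (c := (1 : ℂ))
  -- abbreviations
  set a1 := fderiv ℝ g z₀ 1
  set aI := fderiv ℝ g z₀ Complex.I
  set b1 := fderiv ℝ M₁₁ z₀ 1
  set bI := fderiv ℝ M₁₁ z₀ Complex.I
  set c1 := fderiv ℝ M₂₁ z₀ 1
  set cI := fderiv ℝ M₂₁ z₀ Complex.I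
  simp only [dzbar, dz, Q12, Q21] at h1 h2 ⊢
  rw [hsub, key M₁₁ hM11 1, key M₁₁ hM11 Complex.I,
      key M₂₁ hM21 1, key M₂₁ hM21 Complex.I]
  have hg2 : (g z₀)^2 ≠ 0 := pow_ne_zero 2 hg0
  linear_combination (g z₀)⁻¹ * h1 - (g z₀)⁻¹ * h2
end

section
/- Let k ∈ ℂ and z₀ ∈ ℂ. Suppose g, M₁₂, M₂₂ : ℂ → ℂ are real-differentiable at z₀ with g(z₀) ≠ 0, and suppose that at z₀ the equations ∂M₂₂(z₀) = Q₂₁(z₀)·M₁₂(z₀) and ∂̄M₁₂(z₀) − i·k·M₁₂(z₀) = Q₁₂(z₀)·M₂₂(z₀) hold. Then ∂(z ↦ M₂₂(z)/g(z) − 1)(z₀) = ∂̄(z ↦ M₁₂(z)/g(z))(z₀) − i·k·M₁₂(z₀)/g(z₀); that is, ∂(g⁻¹M₂₂ − 1) = (∂̄ − ik)(g⁻¹M₁₂) at z₀. -/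
open Complex

lemma dz_mul (f h : ℂ → ℂ) (z : ℂ) (hf : DifferentiableAt ℝ f z)
    (hh : DifferentiableAt ℝ h z) :
    dz (fun w => f w * h w) z = dz f z * h z + f z * dz h z := by
  simp [dz, fderiv_fun_mul hf hh]
  ring

lemma dzbar_mul (f h : ℂ → ℂ) (z : ℂ) (hf : DifferentiableAt ℝ f z)
    (hh : DifferentiableAt ℝ h z) :
    dzbar (fun w => f w * h w) z = dzbar f z * h z + f z * dzbar h z := by
  simp [dzbar, fderiv_fun_mul hf hh]
  ring

lemma inv_fderiv (g : ℂ → ℂ) (z : ℂ) (hg : DifferentiableAt ℝ g z) (hg0 : g z ≠ 0) :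
    fderiv ℝ (fun w => (g w)⁻¹) z =
      (((ContinuousLinearMap.smulRight (1 : ℂ →L[ℂ] ℂ) (-(g z ^ 2)⁻¹)).restrictScalars ℝ).comp
        (fderiv ℝ g z)) :=
  (((hasDerivAt_inv hg0).hasFDerivAt.restrictScalars ℝ).comp z hg.hasFDerivAt).fderiv

lemma dz_inv (g : ℂ → ℂ) (z : ℂ) (hg : DifferentiableAt ℝ g z) (hg0 : g z ≠ 0) :
    dz (fun w => (g w)⁻¹) z = -dz g z / (g z)^2 := by
  simp [dz, inv_fderiv g z hg hg0]
  field_simp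
  ring

lemma dzbar_inv (g : ℂ → ℂ) (z : ℂ) (hg : DifferentiableAt ℝ g z) (hg0 : g z ≠ 0) :
    dzbar (fun w => (g w)⁻¹) z = -dzbar g z / (g z)^2 := by
  simp [dzbar, inv_fderiv g z hg hg0]
  field_simp
  ring

theorem stmt1 (k z₀ : ℂ) (g M₁₂ M₂₂ : ℂ → ℂ)
    (hg : DifferentiableAt ℝ g z₀)
    (hM12 : DifferentiableAt ℝ M₁₂ z₀)
    (hM22 : DifferentiableAt ℝ M₂₂ z₀)
    (hg0 : g z₀ ≠ 0)
    (h1 : dz M₂₂ z₀ = Q21 g z₀ * M₁₂ z₀)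
    (h2 : dzbar M₁₂ z₀ - Complex.I * k * M₁₂ z₀ = Q12 g z₀ * M₂₂ z₀) :
    dz (fun z => M₂₂ z / g z - 1) z₀ =
      dzbar (fun z => M₁₂ z / g z) z₀ - Complex.I * k * M₁₂ z₀ / g z₀ := by
  have hginv : DifferentiableAt ℝ (fun z => (g z)⁻¹) z₀ := hg.inv hg0
  have e0 : dz (fun z => M₂₂ z / g z - 1) z₀ = dz (fun z => M₂₂ z * (g z)⁻¹) z₀ := by
    simp [dz, div_eq_mul_inv, fderiv_sub_const]
  have eL : dz (fun z => M₂₂ z * (g z)⁻¹) z₀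
      = dz M₂₂ z₀ * (g z₀)⁻¹ + M₂₂ z₀ * (-dz g z₀ / (g z₀)^2) := by
    rw [dz_mul M₂₂ _ z₀ hM22 hginv, dz_inv g z₀ hg hg0]
  have eR : dzbar (fun z => M₁₂ z / g z) z₀
      = dzbar M₁₂ z₀ * (g z₀)⁻¹ + M₁₂ z₀ * (-dzbar g z₀ / (g z₀)^2) := by
    simp only [div_eq_mul_inv]
    rw [dzbar_mul M₁₂ _ z₀ hM12 hginv, dzbar_inv g z₀ hg hg0]
    ring
  have h2' : dzbar M₁₂ z₀ = Complex.I * k * M₁₂ z₀ + Q12 g z₀ * M₂₂ z₀ := by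
    linear_combination h2
  rw [e0, eL, eR, h1, h2', Q12, Q21]
  field_simp
  ring
end

section
/- Let z₀ ∈ ℂ. Suppose u : ℂ → ℂ is real-differentiable in a neighborhood of z₀, its Wirtinger derivatives ∂u and ∂̄u (as functions of z) are real-differentiable at z₀, and the mixed Wirtinger derivatives agree at z₀: ∂̄(∂u)(z₀) = ∂(∂̄u)(z₀). Suppose g : ℂ → ℂ is real-differentiable at z₀ with g(z₀) ≠ 0, and set γ = g². Then the following are equivalent: (i) ∂(z ↦ γ(z)·∂̄u(z))(z₀) + ∂̄(z ↦ γ(z)·∂u(z))(z₀) = 0 (the generalized Laplace equation ∇·(γ∇u) = 0 at z₀ in Wirtinger form); (ii) ∂̄(z ↦ g(z)·∂u(z))(z₀) = Q₁₂(z₀)·g(z₀)·∂̄u(z₀); (iii) ∂(z ↦ g(z)·∂̄u(z))(z₀) = Q₂₁(z₀)·g(z₀)·∂u(z₀). In other words, setting v = γ^{1/2}∂u and w = γ^{1/2}∂̄u, the pair (v,w) satisfies the first-order system ∂̄v = Q₁₂w, ∂w = Q₂₁v at z₀ if and only if u satisfies the admittivity equation at z₀. -/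
open Complex

theorem stmt2 (z₀ : ℂ) (u g : ℂ → ℂ)
    (hu : ∀ᶠ z in nhds z₀, DifferentiableAt ℝ u z)
    (hdu : DifferentiableAt ℝ (dz u) z₀)
    (hdbaru : DifferentiableAt ℝ (dzbar u) z₀)
    (hmixed : dzbar (dz u) z₀ = dz (dzbar u) z₀)
    (hg : DifferentiableAt ℝ g z₀)
    (hg0 : g z₀ ≠ 0) :
    List.TFAE
      [ dz (fun z => (g z * g z) * dzbar u z) z₀ +
          dzbar (fun z => (g z * g z) * dz u z) z₀ = 0,
        dzbar (fun z => g z * dz u z) z₀ = Q12 g z₀ * (g z₀ * dzbar u z₀),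
        dz (fun z => g z * dzbar u z) z₀ = Q21 g z₀ * (g z₀ * dz u z₀) ] := by
  have hgg : DifferentiableAt ℝ (fun w => g w * g w) z₀ := hg.mul hg
  have h1 : dz (fun z => (g z * g z) * dzbar u z) z₀
      = (dz g z₀ * g z₀ + g z₀ * dz g z₀) * dzbar u z₀ + (g z₀ * g z₀) * dz (dzbar u) z₀ := by
    rw [dz_mul _ _ _ hgg hdbaru, dz_mul _ _ _ hg hg]
  have h2 : dzbar (fun z => (g z * g z) * dz u z) z₀
      = (dzbar g z₀ * g z₀ + g z₀ * dzbar g z₀) * dz u z₀ + (g z₀ * g z₀) * dzbar (dz u) z₀ := by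
    rw [dzbar_mul _ _ _ hgg hdu, dzbar_mul _ _ _ hg hg]
  have h3 : dzbar (fun z => g z * dz u z) z₀
      = dzbar g z₀ * dz u z₀ + g z₀ * dzbar (dz u) z₀ := dzbar_mul _ _ _ hg hdu
  have h4 : dz (fun z => g z * dzbar u z) z₀
      = dz g z₀ * dzbar u z₀ + g z₀ * dz (dzbar u) z₀ := dz_mul _ _ _ hg hdbaru
  set a := g z₀
  set A := dz g z₀
  set B := dzbar g z₀
  set P := dz u z₀
  set Qb := dzbar u z₀
  set M := dz (dzbar u) z₀
  have e1 : (dz (fun z => (g z * g z) * dzbar u z) z₀ +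
      dzbar (fun z => (g z * g z) * dz u z) z₀ = 0) ↔ (A * Qb + B * P + a * M = 0) := by
    rw [h1, h2, hmixed]
    constructor
    · intro h
      have h2a : (2 * a) * (A * Qb + B * P + a * M) = 0 := by linear_combination h
      rcases mul_eq_zero.mp h2a with h' | h'
      · exact absurd h' (by simpa using hg0)
      · exact h'
    · intro h; linear_combination (2 * a) * h
  have e2 : (dzbar (fun z => g z * dz u z) z₀ = Q12 g z₀ * (g z₀ * dzbar u z₀))
      ↔ (A * Qb + B * P + a * M = 0) := by
    rw [h3, hmixed, Q12, div_mul_eq_mul_div, eq_div_iff hg0]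
    constructor
    · intro h
      have h' : a * (A * Qb + B * P + a * M) = 0 := by linear_combination h
      rcases mul_eq_zero.mp h' with h'' | h''
      exacts [absurd h'' hg0, h'']
    · intro h; linear_combination a * h
  have e3 : (dz (fun z => g z * dzbar u z) z₀ = Q21 g z₀ * (g z₀ * dz u z₀))
      ↔ (A * Qb + B * P + a * M = 0) := by
    rw [h4, Q21, div_mul_eq_mul_div, eq_div_iff hg0]
    constructor
    · intro h
      have h' : a * (A * Qb + B * P + a * M) = 0 := by linear_combination h
      rcases mul_eq_zero.mp h' with h'' | h''
      exacts [absurd h'' hg0, h'']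
    · intro h; linear_combination a * h
  tfae_have 1 ↔ 2 := e1.trans e2.symm
  tfae_have 2 ↔ 3 := e2.trans e3.symm
  tfae_finish
end
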